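/- arXiv:1409.4950 — 3 statements merged into one kernel-verified Lean document; each statement's English description precedes it below -/
import Mathlib

section
/- Let K be a field and let W be the Weierstrass curve over K given by y² + a₁xy + a₃y = x³ + a₂x², with discriminant Δ ≠ 0 and a₃ ≠ 0. Let P = (0, 0), which is a K-rational point of W. Then P is not 2-torsion (i.e., 2P ≠ O in the group of K-points), and 3P = O if and only if a₂ = 0. -/
open WeierstrassCurve.Affine WeierstrassCurve.Affine.Point

open Classical in
/-- For the Weierstrass curve `y² + a₁xy + a₃y = x³ + a₂x²` over
a field `K` with `Δ ≠ 0` and `a₃ ≠ 0`, the point `P = (0, 0)` is a K-rational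
point, `P` is not 2-torsion, and `3P = O` if and only if `a₂ = 0`. -/
theorem zero_zero_point_torsion {K : Type*} [Field K] (a₁ a₂ a₃ : K)
    (hΔ : (WeierstrassCurve.mk a₁ a₂ a₃ 0 0 : WeierstrassCurve K).Δ ≠ 0)
    (ha₃ : a₃ ≠ 0) :
    (WeierstrassCurve.mk a₁ a₂ a₃ 0 0 : WeierstrassCurve K).toAffine.Nonsingular 0 0 ∧
    ∀ hP : (WeierstrassCurve.mk a₁ a₂ a₃ 0 0 : WeierstrassCurve K).toAffine.Nonsingular 0 0,
      (2 • WeierstrassCurve.Affine.Point.some 0 0 hP ≠ 0) ∧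
      (3 • WeierstrassCurve.Affine.Point.some 0 0 hP = 0 ↔ a₂ = 0) := by
  set W : WeierstrassCurve.Affine K := WeierstrassCurve.mk a₁ a₂ a₃ 0 0 with hW
  have hns : W.Nonsingular 0 0 := by
    rw [nonsingular_zero]; exact ⟨rfl, Or.inl ha₃⟩
  refine ⟨hns, fun hP => ?_⟩
  have hy0 : (0 : K) ≠ W.negY 0 0 := by
    simp [negY, hW, ha₃]
  have hslope : W.slope 0 0 0 0 = 0 := by
    rw [slope_of_Y_ne rfl hy0]
    simp [hW]
  have hdbl : 2 • (some _ _ hP) = some _ _ (nonsingular_add hP hP fun h => hy0 h.2) := by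
    rw [two_nsmul, add_of_Y_ne hy0]
  have hxd : W.addX 0 0 (W.slope 0 0 0 0) = -a₂ := by
    rw [hslope]; simp [hW]
  have hyd : W.addY 0 0 0 (W.slope 0 0 0 0) = a₁ * a₂ - a₃ := by
    rw [hslope]; simp [hW, negY, addY, negAddY, addX]
  constructor
  · rw [hdbl]; exact some_ne_zero _
  · have h3 : 3 • (some _ _ hP) = some _ _ (nonsingular_add hP hP fun h => hy0 h.2) + some _ _ hP := by
      rw [show (3 : ℕ) = 2 + 1 by rfl, add_nsmul, one_nsmul, hdbl]
    rw [h3]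
    constructor
    · intro h
      by_contra ha₂
      have hx : W.addX 0 0 (W.slope 0 0 0 0) ≠ 0 := by
        rw [hxd]; exact neg_ne_zero.mpr ha₂
      rw [add_of_X_ne hx] at h
      exact some_ne_zero _ h
    · intro ha₂
      apply add_of_Y_eq
      · rw [hxd, ha₂, _root_.neg_zero]
      · rw [hyd, ha₂]
        simp [negY, hW]
end

section
/- Let K = ℂ(t) be the field of rational functions in one variable t over ℂ. The Weierstrass curve S over K given by y² + xy + ty = x³ has nonzero discriminant, and the point P = (0, 0) has exact order 3 in the group S(K) of K-rational points; in particular {O, P, −P} is a subgroup of S(K) isomorphic to ℤ/3. -/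
open WeierstrassCurve RatFunc

open Classical

noncomputable abbrev Scrv : WeierstrassCurve (RatFunc ℂ) := ⟨1, 0, RatFunc.X, 0, 0⟩

lemma hXne : (RatFunc.X : RatFunc ℂ) ≠ 0 := RatFunc.X_ne_zero

lemma h27ne : (1 : RatFunc ℂ) - 27 * RatFunc.X ≠ 0 := by
  have : (1 : RatFunc ℂ) - 27 * RatFunc.X =
      algebraMap (Polynomial ℂ) (RatFunc ℂ) (1 - 27 * Polynomial.X) := by
    simp [map_sub, map_mul, map_ofNat, RatFunc.algebraMap_X]
  rw [this]
  apply RatFunc.algebraMap_ne_zero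
  intro h
  have := congrArg (fun p => Polynomial.coeff p 1) h
  simp [Polynomial.coeff_one] at this

lemma hΔ : (Scrv).Δ ≠ 0 := by
  have : Scrv.Δ = RatFunc.X ^ 3 * (1 - 27 * RatFunc.X) := by
    simp [WeierstrassCurve.Δ, WeierstrassCurve.b₂, WeierstrassCurve.b₄,
      WeierstrassCurve.b₆, WeierstrassCurve.b₈]
    ring
  rw [this]
  exact mul_ne_zero (pow_ne_zero _ hXne) h27ne

lemma hNS : Scrv.toAffine.Nonsingular 0 0 := by
  rw [WeierstrassCurve.Affine.nonsingular_iff]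
  refine ⟨by rw [WeierstrassCurve.Affine.equation_iff]; ring, Or.inr ?_⟩
  simpa using hXne

namespace WeierstrassCurve.Affine.Point

lemma some_eq_some {F : Type*} [Field F] {W : WeierstrassCurve.Affine F}
    {x₁ y₁ x₂ y₂ : F} {h₁ : W.Nonsingular x₁ y₁} {h₂ : W.Nonsingular x₂ y₂}
    (hx : x₁ = x₂) (hy : y₁ = y₂) : some x₁ y₁ h₁ = some x₂ y₂ h₂ := by
  subst hx; subst hy; rfl

lemma key_double (hP : Scrv.toAffine.Nonsingular 0 0) :
    some 0 0 hP + some 0 0 hP = - some 0 0 hP := by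
  have hy : (0 : RatFunc ℂ) ≠ Scrv.toAffine.negY 0 0 := by
    simp [WeierstrassCurve.Affine.negY, hXne]
  rw [add_self_of_Y_ne hy, neg_some]
  have hL : Scrv.toAffine.slope 0 0 0 0 = 0 := by
    rw [WeierstrassCurve.Affine.slope_of_Y_ne rfl hy]; simp
  have hx : Scrv.toAffine.addX 0 0 (Scrv.toAffine.slope 0 0 0 0) = 0 := by
    rw [hL]; simp
  have hy' : Scrv.toAffine.addY 0 0 0 (Scrv.toAffine.slope 0 0 0 0) =
      Scrv.toAffine.negY 0 0 := by
    rw [hL]; simp [WeierstrassCurve.Affine.addY, WeierstrassCurve.Affine.negAddY,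
      WeierstrassCurve.Affine.negY, WeierstrassCurve.Affine.addX]
  exact some_eq_some hx hy'

lemma some_ne_zero' (hP : Scrv.toAffine.Nonsingular 0 0) : some 0 0 hP ≠ 0 := by
  intro h
  have h' := (zero_def (W' := Scrv.toAffine)) ▸ h
  cases h'

lemma key_three (hP : Scrv.toAffine.Nonsingular 0 0) : (3 : ℕ) • some 0 0 hP = 0 := by
  have : (3 : ℕ) • some 0 0 hP = (some 0 0 hP + some 0 0 hP) + some 0 0 hP := by
    rw [succ_nsmul, two_nsmul]
  rw [this, key_double]
  exact neg_add_cancel (WeierstrassCurve.Affine.Point.some 0 0 hP)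

lemma key_order (hP : Scrv.toAffine.Nonsingular 0 0) : addOrderOf (some 0 0 hP) = 3 := by
  haveI : Fact (Nat.Prime 3) := ⟨by norm_num⟩
  exact addOrderOf_eq_prime (key_three hP) (some_ne_zero' hP)

lemma key_cyclic (hP : Scrv.toAffine.Nonsingular 0 0) :
    IsAddCyclic (AddSubgroup.zmultiples (some 0 0 hP)) := by
  refine ⟨⟨⟨some 0 0 hP, AddSubgroup.mem_zmultiples _⟩, ?_⟩⟩
  rintro ⟨q, n, rfl⟩
  exact ⟨n, Subtype.ext (by simp)⟩

end WeierstrassCurve.Affine.Point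

open Classical in
/-- Over `K = ℂ(t)`, the Weierstrass curve
`S : y² + xy + ty = x³` has nonzero discriminant, and `P = (0, 0)` has exact
order `3` in `S(K)`; in particular the subgroup `{O, P, −P}` generated by `P`
is isomorphic to `ℤ/3`. -/
theorem beauville_9111_mordell_weil_first :
    (WeierstrassCurve.mk 1 0 RatFunc.X 0 0 : WeierstrassCurve (RatFunc ℂ)).Δ ≠ 0 ∧
    (WeierstrassCurve.mk 1 0 RatFunc.X 0 0 :
      WeierstrassCurve (RatFunc ℂ)).toAffine.Nonsingular 0 0 ∧
    ∀ hP : (WeierstrassCurve.mk 1 0 RatFunc.X 0 0 :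
        WeierstrassCurve (RatFunc ℂ)).toAffine.Nonsingular 0 0,
      addOrderOf (WeierstrassCurve.Affine.Point.some 0 0 hP) = 3 ∧
      ((AddSubgroup.zmultiples (WeierstrassCurve.Affine.Point.some 0 0 hP) : Set _) =
        {0, WeierstrassCurve.Affine.Point.some 0 0 hP,
          -WeierstrassCurve.Affine.Point.some 0 0 hP}) ∧
      Nonempty
        (AddSubgroup.zmultiples (WeierstrassCurve.Affine.Point.some 0 0 hP) ≃+ ZMod 3) := by
  refine ⟨hΔ, hNS, fun hP => ⟨WeierstrassCurve.Affine.Point.key_order hP, ?_, ?_⟩⟩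
  · set P := WeierstrassCurve.Affine.Point.some 0 0 hP with hPdef
    ext Q
    simp only [SetLike.mem_coe, AddSubgroup.mem_zmultiples_iff, Set.mem_insert_iff,
      Set.mem_singleton_iff]
    constructor
    · rintro ⟨n, rfl⟩
      rw [← mod_addOrderOf_zsmul, WeierstrassCurve.Affine.Point.key_order hP]
      simp only [Nat.cast_ofNat]
      have h3 : (n : ℤ) % 3 = 0 ∨ (n : ℤ) % 3 = 1 ∨ (n : ℤ) % 3 = 2 := by omega
      rcases h3 with h | h | h <;> rw [h]
      · exact Or.inl (zero_zsmul P)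
      · exact Or.inr (Or.inl (one_zsmul P))
      · refine Or.inr (Or.inr ?_)
        rw [two_zsmul, WeierstrassCurve.Affine.Point.key_double]
    · rintro (rfl | rfl | rfl)
      · exact ⟨0, zero_zsmul P⟩
      · exact ⟨1, one_zsmul P⟩
      · exact ⟨-1, by simp⟩
  · have hcard : Nat.card (AddSubgroup.zmultiples (WeierstrassCurve.Affine.Point.some 0 0 hP)) = 3 := by
      rw [Nat.card_zmultiples, WeierstrassCurve.Affine.Point.key_order hP]
    exact ⟨(zmodAddCyclicAddEquiv (WeierstrassCurve.Affine.Point.key_cyclic hP)).symm.trans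
      (ZMod.ringEquivCongr hcard).toAddEquiv⟩
end

section
/- Let K = ℂ(t) be the field of rational functions in one variable t over ℂ. The Weierstrass curve S' over K given by y² + ty = x³ has nonzero discriminant, and the point P = (0, 0) has exact order 3 in the group S'(K) of K-rational points; in particular {O, P, −P} is a subgroup of S'(K) isomorphic to ℤ/3. -/
open WeierstrassCurve.Affine WeierstrassCurve.Affine.Point

private lemma some_eq_some {F : Type*} [Field F] {W : WeierstrassCurve.Affine F}
    {x₁ y₁ x₂ y₂ : F} (hx : x₁ = x₂) (hy : y₁ = y₂) (h₁ : W.Nonsingular x₁ y₁)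
    (h₂ : W.Nonsingular x₂ y₂) :
    WeierstrassCurve.Affine.Point.some _ _ h₁ = WeierstrassCurve.Affine.Point.some _ _ h₂ := by
  subst hx; subst hy; rfl

open Classical in
/-- Over `K = ℂ(t)`, the Weierstrass curve
`S' : y² + ty = x³` has nonzero discriminant, and `P = (0, 0)` has exact
order `3` in `S'(K)`; in particular the subgroup `{O, P, −P}` generated by `P`
is isomorphic to `ℤ/3`. -/
theorem beauville_9111_mordell_weil_second :
    (WeierstrassCurve.mk 0 0 RatFunc.X 0 0 : WeierstrassCurve (RatFunc ℂ)).Δ ≠ 0 ∧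
    (WeierstrassCurve.mk 0 0 RatFunc.X 0 0 :
      WeierstrassCurve (RatFunc ℂ)).toAffine.Nonsingular 0 0 ∧
    ∀ hP : (WeierstrassCurve.mk 0 0 RatFunc.X 0 0 :
        WeierstrassCurve (RatFunc ℂ)).toAffine.Nonsingular 0 0,
      addOrderOf (WeierstrassCurve.Affine.Point.some _ _ hP) = 3 ∧
      ((AddSubgroup.zmultiples (WeierstrassCurve.Affine.Point.some _ _ hP) : Set _) =
        {0, WeierstrassCurve.Affine.Point.some _ _ hP,
          -WeierstrassCurve.Affine.Point.some _ _ hP}) ∧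
      Nonempty
        (AddSubgroup.zmultiples (WeierstrassCurve.Affine.Point.some _ _ hP) ≃+ ZMod 3) := by
  set W : WeierstrassCurve.Affine (RatFunc ℂ) :=
    (WeierstrassCurve.mk 0 0 RatFunc.X 0 0 : WeierstrassCurve (RatFunc ℂ)) with hW
  have hX : (RatFunc.X : RatFunc ℂ) ≠ 0 := RatFunc.X_ne_zero
  have hΔ : W.Δ = -27 * RatFunc.X ^ 4 := by
    simp only [hW, WeierstrassCurve.Δ, WeierstrassCurve.b₂, WeierstrassCurve.b₄,
      WeierstrassCurve.b₆, WeierstrassCurve.b₈]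
    ring
  have hΔ : W.Δ ≠ 0 := by
    rw [hΔ]
    haveI : CharZero (RatFunc ℂ) :=
      charZero_of_injective_algebraMap (algebraMap ℂ (RatFunc ℂ)).injective
    have h27 : (27 : RatFunc ℂ) ≠ 0 := by
      have : ((27 : ℕ) : RatFunc ℂ) ≠ 0 := Nat.cast_ne_zero.mpr (by norm_num)
      simp only [Nat.cast_ofNat] at this; exact this
    exact mul_ne_zero (neg_ne_zero.mpr h27) (pow_ne_zero _ hX)
  have hns : W.Nonsingular 0 0 := by
    rw [nonsingular_iff, equation_iff]
    simp [hW, hX]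
  refine ⟨hΔ, hns, fun hP => ?_⟩
  set P := WeierstrassCurve.Affine.Point.some _ _ hP with hPdef
  have hne : (0 : RatFunc ℂ) ≠ W.negY 0 0 := by
    simp [negY, hW, hX, neg_eq_zero]
  -- 2P = -P
  have h2 : P + P = some _ _ ((nonsingular_neg 0 0).mpr hP) := by
    rw [hPdef, add_of_Y_ne hne]
    refine some_eq_some ?_ ?_ _ _
    · rw [slope_of_Y_ne rfl hne]; simp [addX, hW]
    · rw [slope_of_Y_ne rfl hne]; simp [addY, negAddY, addX, negY, hW]
  have hnegP : -P = some _ _ ((nonsingular_neg 0 0).mpr hP) := by rw [hPdef, neg_some]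
  have h2' : P + P = -P := by rw [h2, hnegP]
  have h3 : P + P + P = 0 := by rw [h2']; exact neg_add_cancel P
  have hP0 : P ≠ 0 := by
    rw [hPdef]
    intro h
    cases h
  have h3n : (3 : ℕ) • P = 0 := by
    rw [show (3 : ℕ) = 2 + 1 from rfl, add_nsmul, two_nsmul, one_nsmul]
    exact h3
  haveI : Fact (Nat.Prime 3) := ⟨by norm_num⟩
  have hord : addOrderOf P = 3 := addOrderOf_eq_prime h3n hP0
  have h3z : (3 : ℤ) • P = 0 := by
    rw [show (3 : ℤ) = ((3 : ℕ) : ℤ) from rfl, natCast_zsmul]; exact h3n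
  have hset : (AddSubgroup.zmultiples P : Set _) = {0, P, -P} := by
    ext x
    simp only [SetLike.mem_coe, AddSubgroup.mem_zmultiples_iff, Set.mem_insert_iff,
      Set.mem_singleton_iff]
    constructor
    · rintro ⟨k, rfl⟩
      have hk : k • P = (k % 3) • P := by
        conv_lhs => rw [← mod_addOrderOf_zsmul]
        rw [hord]
        norm_num
      have : k % 3 = 0 ∨ k % 3 = 1 ∨ k % 3 = 2 := by omega
      rcases this with h | h | h
      · left; rw [hk, h, zero_zsmul]
      · right; left; rw [hk, h, one_zsmul]
      · right; right; rw [hk, h, show (2 : ℤ) • P = P + P from two_zsmul P, h2']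
    · rintro (rfl | rfl | rfl)
      · exact ⟨0, zero_zsmul P⟩
      · exact ⟨1, one_zsmul P⟩
      · exact ⟨-1, by simp⟩
  refine ⟨hord, hset, ?_⟩
  have hcyc : IsAddCyclic (AddSubgroup.zmultiples P) := by
    refine ⟨⟨⟨P, AddSubgroup.mem_zmultiples P⟩, ?_⟩⟩
    rintro ⟨x, hx⟩
    obtain ⟨k, rfl⟩ := AddSubgroup.mem_zmultiples_iff.mp hx
    exact ⟨k, by ext; simp⟩
  have hcard : Nat.card (AddSubgroup.zmultiples P) = 3 := by
    rw [Nat.card_zmultiples, hord]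
  have e := zmodAddCyclicAddEquiv hcyc
  rw [hcard] at e
  exact ⟨e.symm⟩
end
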